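/- Let S, R, K, r_S, r_R, d_S, d_R, D̄ be positive real numbers and α, β ≥ 1 with β ≤ α. Assume S + α·R < K and (1 − β) + (αβ − 1)·R/K ≤ 0. If −r_S·(1 − (S+αR)/K)·D̄·S − d_S·S + r_R·(1 − (βS+R)/K)·R − d_R·R > 0, then r_R·β·R > D̄·r_S·S. -/

import Mathlib

/-- pointwise algebraic core of the terminal-growth lemma under
maximal dose with non-neutral competition `1 ≤ β ≤ α`: if the derivative of the
total burden `-rS·(1-(S+αR)/K)·D̄·S - dS·S + rR·(1-(βS+R)/K)·R - dR·R` is positive,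
`S + α·R < K` and `(1-β) + (αβ-1)·R/K ≤ 0`, then `rR·β·R > D̄·rS·S`. -/
theorem stmt_6 (S R K rS rR dS dR Dbar α β : ℝ)
    (hS : 0 < S) (hR : 0 < R) (hK : 0 < K) (hrS : 0 < rS) (hrR : 0 < rR)
    (hdS : 0 < dS) (hdR : 0 < dR) (hDbar : 0 < Dbar)
    (hβ1 : 1 ≤ β) (hα1 : 1 ≤ α) (hβα : β ≤ α)
    (hcap : S + α * R < K)
    (hsign : (1 - β) + (α * β - 1) * R / K ≤ 0)
    (h : -(rS * (1 - (S + α * R) / K) * Dbar * S) - dS * S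
        + rR * (1 - (β * S + R) / K) * R - dR * R > 0) :
    rR * β * R > Dbar * rS * S := by
  obtain ⟨A, hA⟩ : ∃ A, A = 1 - (S + α * R) / K := ⟨_, rfl⟩
  obtain ⟨B, hB⟩ : ∃ B, B = 1 - (β * S + R) / K := ⟨_, rfl⟩
  rw [← hA, ← hB] at h
  have hApos : 0 < A := by
    have : (S + α * R) / K < 1 := (div_lt_one hK).mpr hcap
    linarith
  have hBA : B ≤ β * A := by
    have key : B - β * A = (1 - β) + (α * β - 1) * R / K := by
      rw [hA, hB]; field_simp; ring
    linarith
  have h1 : rR * B * R > rS * A * Dbar * S := by nlinarith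
  have h2 : rR * (β * A) * R ≥ rR * B * R := by
    nlinarith [mul_le_mul_of_nonneg_left hBA (by positivity : (0:ℝ) ≤ rR * R)]
  have h3 : Dbar * rS * S * A < rR * β * R * A := by nlinarith
  have := (mul_lt_mul_iff_of_pos_right hApos).mp h3
  linarith
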